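/- Let n be a positive natural number, w : ℕ, tab : Fin n → BitVec w a lookup table, and idx : Fin n a secret index. For each i : Fin n define the bitmask m i : BitVec w := 0 - (if i = idx then 1 else 0). Then the bitwise OR over all i : Fin n of (tab i &&& m i) equals tab idx; formally, folding the operation (· ||| ·) with initial value 0 over the family (fun i => tab i &&& m i) on Finset.univ yields tab idx. (This is the functional-correctness claim underlying the paper's constant-time table lookup ct_select_lookup: scanning the whole table and accumulating each entry masked by an arithmetic equality mask returns exactly the entry at the secret index, without any branch or memory access pattern depending on idx.) -/

import Mathlib

instance bitVecOrComm (w : ℕ) : Std.Commutative (α := BitVec w) (· ||| ·) :=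
  ⟨fun a b => BitVec.or_comm a b⟩

instance bitVecOrAssoc (w : ℕ) : Std.Associative (α := BitVec w) (· ||| ·) :=
  ⟨fun a b c => BitVec.or_assoc a b c⟩

lemma fold_or_zero (w : ℕ) {α : Type*} [DecidableEq α] (s : Finset α) :
    Finset.fold (β := BitVec w) (· ||| ·) 0 (fun _ => 0) s = 0 := by
  induction s using Finset.induction with
  | empty => rfl
  | insert _ _ h ih => rw [Finset.fold_insert h, ih]; simp

/-- Functional correctness of the constant-time table lookup
`ct_select_lookup`: OR-accumulating every table entry masked by the arithmetic
equality mask m i = 0 - (i == idx) returns exactly the entry at the secret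
index. -/
theorem ct_select_lookup_correct (n : ℕ) (hn : 0 < n) (w : ℕ)
    (tab : Fin n → BitVec w) (idx : Fin n) :
    Finset.univ.fold (· ||| ·) (0 : BitVec w)
      (fun i : Fin n => tab i &&& (0 - (if i = idx then 1 else 0))) = tab idx := by
  classical
  have hmem : idx ∈ (Finset.univ : Finset (Fin n)) := Finset.mem_univ idx
  rw [← Finset.insert_erase hmem, Finset.fold_insert (Finset.notMem_erase _ _)]
  have h1 : (Finset.univ.erase idx).fold (· ||| ·) (0 : BitVec w)
      (fun i : Fin n => tab i &&& (0 - (if i = idx then 1 else 0))) = 0 := by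
    rw [Finset.fold_congr (g := fun _ => (0 : BitVec w))]
    · exact fold_or_zero w _
    · intro i hi
      simp only [Finset.mem_erase] at hi
      simp [hi.1]
  rw [h1]
  simp [BitVec.neg_one_eq_allOnes, BitVec.and_allOnes]
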